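/- Let τ_E denote the Euclidean topology on the real line ℝ, let ℚ be the set of rationals and ℙ = ℝ \ ℚ the set of irrationals. Then τ_E = τ_E(ℚ) ∩ τ_E(ℙ); the space (ℝ, τ_E(ℙ)) is separable and metrizable with Ind (ℝ, τ_E(ℙ)) ≤ 0; and the space (ℝ, τ_E(ℚ)) is hereditarily normal with Ind (ℝ, τ_E(ℚ)) ≤ 0, and is neither metrizable nor separable. -/

import Mathlib

/-- The Bing–Hanner extension `τ(M)` of a topology `τ` on `X` determined by a subset `M ⊆ X`:
its open sets are exactly the sets of the form `U ∪ K` with `U` a `τ`-open set and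
`K ⊆ X \ M`. -/
def bingHanner {X : Type*} (τ : TopologicalSpace X) (M : Set X) : TopologicalSpace X where
  IsOpen O := ∃ U K : Set X, τ.IsOpen U ∧ K ⊆ Mᶜ ∧ O = U ∪ K
  isOpen_univ := ⟨Set.univ, ∅, τ.isOpen_univ, by simp, by simp⟩
  isOpen_inter := by
    rintro s t ⟨U₁, K₁, hU₁, hK₁, rfl⟩ ⟨U₂, K₂, hU₂, hK₂, rfl⟩
    refine ⟨U₁ ∩ U₂, ((U₁ ∪ K₁) ∩ (U₂ ∪ K₂)) \ (U₁ ∩ U₂),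
      τ.isOpen_inter _ _ hU₁ hU₂, ?_, ?_⟩
    · rintro x ⟨⟨h1, h2⟩, hn⟩
      rcases h1 with h1 | h1
      · rcases h2 with h2 | h2
        · exact absurd ⟨h1, h2⟩ hn
        · exact hK₂ h2
      · exact hK₁ h1
    · have hsub : U₁ ∩ U₂ ⊆ (U₁ ∪ K₁) ∩ (U₂ ∪ K₂) :=
        fun x hx => ⟨Or.inl hx.1, Or.inl hx.2⟩
      exact (Set.union_diff_cancel hsub).symm
  isOpen_sUnion := by
    intro S hS
    choose U K hU hK hEq using hS
    refine ⟨⋃ s, ⋃ h : s ∈ S, U s h, ⋃ s, ⋃ h : s ∈ S, K s h, ?_, ?_, ?_⟩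
    · letI := τ
      exact isOpen_iUnion fun s => isOpen_iUnion fun h => hU s h
    · exact Set.iUnion_subset fun s => Set.iUnion_subset fun h => hK s h
    · ext x
      simp only [Set.mem_sUnion, Set.mem_union, Set.mem_iUnion]
      constructor
      · rintro ⟨s, hs, hx⟩
        rw [hEq s hs] at hx
        rcases hx with hx | hx
        · exact Or.inl ⟨s, hs, hx⟩
        · exact Or.inr ⟨s, hs, hx⟩
      · rintro (⟨s, hs, hx⟩ | ⟨s, hs, hx⟩)
        · exact ⟨s, hs, by rw [hEq s hs]; exact Or.inl hx⟩
        · exact ⟨s, hs, by rw [hEq s hs]; exact Or.inr hx⟩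

/-- `covDimLE t n` : the covering dimension of `(X, t)` is at most `n`, i.e. every finite
open cover admits a finite open refinement covering `X` in which any `n + 2` pairwise
distinct members have empty intersection. -/
def covDimLE {X : Type*} (t : TopologicalSpace X) (n : ℕ) : Prop :=
  ∀ C : Set (Set X), C.Finite → (∀ U ∈ C, t.IsOpen U) → ⋃₀ C = Set.univ →
    ∃ V : Set (Set X), V.Finite ∧ (∀ U ∈ V, t.IsOpen U) ∧ ⋃₀ V = Set.univ ∧
      (∀ U ∈ V, ∃ W ∈ C, U ⊆ W) ∧
      ∀ F : Finset (Set X), ↑F ⊆ V → F.card = n + 2 → ⋂₀ (F : Set (Set X)) = ∅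

/-- `IndLE0 t` : the large inductive dimension of `(Z, t)` is at most `0`, i.e. any two
disjoint closed sets are separated by a clopen set. -/
def IndLE0 {Z : Type*} (t : TopologicalSpace Z) : Prop :=
  ∀ A B : Set Z, @IsClosed Z t A → @IsClosed Z t B → Disjoint A B →
    ∃ U : Set Z, t.IsOpen U ∧ @IsClosed Z t U ∧ A ⊆ U ∧ U ∩ B = ∅

/-- `indLE0 t` : the small inductive dimension of `(Z, t)` is at most `0`, i.e. every point
has a neighborhood basis of clopen sets. -/
def indLE0 {Z : Type*} (t : TopologicalSpace Z) : Prop :=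
  ∀ (x : Z) (O : Set Z), t.IsOpen O → x ∈ O →
    ∃ U : Set Z, t.IsOpen U ∧ @IsClosed Z t U ∧ x ∈ U ∧ U ⊆ O

/-- `L` is a partition between `A` and `B` in `(X, t)`. -/
def isPartitionBetween {X : Type*} (t : TopologicalSpace X) (A B L : Set X) : Prop :=
  ∃ U V : Set X, t.IsOpen U ∧ t.IsOpen V ∧ Disjoint U V ∧ A ⊆ U ∧ B ⊆ V ∧ L = (U ∪ V)ᶜ

section Helpers

open Set Topology

variable {M : Set ℝ}

local notation "bh" => bingHanner (inferInstance : TopologicalSpace ℝ)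

lemma bh_isOpen_elim {O : Set ℝ} (h : @IsOpen ℝ (bh M) O) :
    ∃ U K : Set ℝ, IsOpen U ∧ K ⊆ Mᶜ ∧ O = U ∪ K := h

lemma bh_open_of_open {O : Set ℝ} (h : IsOpen O) : @IsOpen ℝ (bh M) O :=
  ⟨O, ∅, h, by simp, by simp⟩

lemma bh_open_of_subset_compl {K : Set ℝ} (h : K ⊆ Mᶜ) : @IsOpen ℝ (bh M) K :=
  ⟨∅, K, isOpen_empty, h, by simp⟩

lemma bh_closed_of_closed {C : Set ℝ} (h : IsClosed C) : @IsClosed ℝ (bh M) C :=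
  @IsClosed.mk ℝ (bh M) C (bh_open_of_open h.isOpen_compl)

lemma bh_t1 : @T1Space ℝ (bh M) :=
  @T1Space.mk ℝ (bh M) fun _ => bh_closed_of_closed isClosed_singleton

lemma bh_closed_Ioo {a b : ℝ} (ha : a ∈ Mᶜ) (hb : b ∈ Mᶜ) :
    @IsClosed ℝ (bh M) (Set.Ioo a b) := by
  refine @IsClosed.mk ℝ (bh M) _ ?_
  refine ⟨Set.Iio a ∪ Set.Ioi b, (Set.Ioo a b)ᶜ \ (Set.Iio a ∪ Set.Ioi b),
    isOpen_Iio.union isOpen_Ioi, ?_, (Set.union_diff_cancel ?_).symm⟩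
  · rintro x ⟨hx1, hx2⟩
    simp only [Set.mem_compl_iff, Set.mem_Ioo, not_and_or, not_lt] at hx1
    simp only [Set.mem_union, Set.mem_Iio, Set.mem_Ioi, not_or, not_lt] at hx2
    have hab : x = a ∨ x = b := by
      rcases hx1 with h | h
      · exact Or.inl (le_antisymm h hx2.1)
      · exact Or.inr (le_antisymm hx2.2 h)
    rcases hab with rfl | rfl
    exacts [ha, hb]
  · rintro x (h | h) <;>
      simp only [Set.mem_Iio, Set.mem_Ioi] at h <;>
      simp only [Set.mem_compl_iff, Set.mem_Ioo, not_and_or, not_lt]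
    · exact Or.inl h.le
    · exact Or.inr h.le

lemma exists_Ioo {f : ℕ → ℝ} (hf : DenseRange f) {U : Set ℝ} (hU : IsOpen U) {x : ℝ}
    (hx : x ∈ U) : ∃ i j, x ∈ Set.Ioo (f i) (f j) ∧ Set.Ioo (f i) (f j) ⊆ U := by
  rcases Metric.isOpen_iff.1 hU x hx with ⟨ε, hε, hb⟩
  obtain ⟨i, hi⟩ := hf.exists_mem_open (isOpen_Ioo (a := x - ε) (b := x))
    (Set.nonempty_Ioo.2 (by linarith))
  obtain ⟨j, hj⟩ := hf.exists_mem_open (isOpen_Ioo (a := x) (b := x + ε))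
    (Set.nonempty_Ioo.2 (by linarith))
  simp only [Set.mem_Ioo] at hi hj
  refine ⟨i, j, ⟨hi.2, hj.1⟩, fun y hy => hb ?_⟩
  rw [Metric.mem_ball, Real.dist_eq, abs_lt]
  constructor <;> [linarith [hi.1, hy.1]; linarith [hj.2, hy.2]]

lemma bh_nhd {f : ℕ → ℝ} (hf : DenseRange f) (hfM : ∀ n, f n ∈ Mᶜ) {O : Set ℝ}
    (hO : @IsOpen ℝ (bh M) O) {x : ℝ} (hx : x ∈ O) :
    ∃ C : Set ℝ, @IsOpen ℝ (bh M) C ∧ @IsClosed ℝ (bh M) C ∧ x ∈ C ∧ C ⊆ O := by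
  by_cases hxM : x ∈ M
  · obtain ⟨U, K, hU, hK, rfl⟩ := bh_isOpen_elim hO
    have hxU : x ∈ U := by
      rcases hx with h | h
      · exact h
      · exact absurd hxM (hK h)
    obtain ⟨i, j, hmem, hsub⟩ := exists_Ioo hf hU hxU
    exact ⟨_, bh_open_of_open isOpen_Ioo, bh_closed_Ioo (hfM i) (hfM j), hmem,
      hsub.trans Set.subset_union_left⟩
  · exact ⟨{x}, bh_open_of_subset_compl (by simpa using hxM),
      bh_closed_of_closed isClosed_singleton, rfl, Set.singleton_subset_iff.2 hx⟩

lemma bh_open_union {s u : Set ℝ} (hs : @IsOpen ℝ (bh M) s) (hu : @IsOpen ℝ (bh M) u) :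
    @IsOpen ℝ (bh M) (s ∪ u) := @IsOpen.union ℝ s u (bh M) hs hu

lemma bh_open_inter {s u : Set ℝ} (hs : @IsOpen ℝ (bh M) s) (hu : @IsOpen ℝ (bh M) u) :
    @IsOpen ℝ (bh M) (s ∩ u) := @IsOpen.inter ℝ (bh M) s u hs hu

lemma bh_open_iUnion {ι : Sort*} {s : ι → Set ℝ} (hs : ∀ i, @IsOpen ℝ (bh M) (s i)) :
    @IsOpen ℝ (bh M) (⋃ i, s i) := @isOpen_iUnion ℝ ι (bh M) s hs

lemma bh_closed_biUnion {s : Finset ℕ} {g : ℕ → Set ℝ} (h : ∀ k, @IsClosed ℝ (bh M) (g k)) :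
    @IsClosed ℝ (bh M) (⋃ k ∈ s, g k) :=
  @Set.Finite.isClosed_biUnion ℝ ℕ (bh M) (↑s) g (Finset.finite_toSet s) (fun k _ => h k)

lemma bh_key (f : ℕ → ℝ) (hf : DenseRange f) (hfM : ∀ n, f n ∈ Mᶜ)
    (A B : Set ℝ) (hA : @IsClosed ℝ (bh M) A) (hB : @IsClosed ℝ (bh M) B)
    (hAB : Disjoint A B) :
    ∃ U : Set ℝ, @IsOpen ℝ (bh M) U ∧ @IsClosed ℝ (bh M) U ∧ A ⊆ U ∧ U ∩ B = ∅ := by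
  classical
  set g : ℕ → Set ℝ := fun n =>
    if Set.Ioo (f (Nat.unpair n).1) (f (Nat.unpair n).2) ∩ A = ∅ ∨
       Set.Ioo (f (Nat.unpair n).1) (f (Nat.unpair n).2) ∩ B = ∅
    then Set.Ioo (f (Nat.unpair n).1) (f (Nat.unpair n).2) else ∅ with hgdef
  have hgopen : ∀ n, @IsOpen ℝ (bh M) (g n) := fun n => by
    rw [hgdef]; dsimp only; split_ifs
    exacts [bh_open_of_open isOpen_Ioo, bh_open_of_open isOpen_empty]
  have hgclosed : ∀ n, @IsClosed ℝ (bh M) (g n) := fun n => by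
    rw [hgdef]; dsimp only; split_ifs
    exacts [bh_closed_Ioo (hfM _) (hfM _), bh_closed_of_closed isClosed_empty]
  have hgdich : ∀ n, g n ∩ A = ∅ ∨ g n ∩ B = ∅ := fun n => by
    rw [hgdef]; dsimp only; split_ifs with h
    · exact h
    · simp
  have hgcover : M ⊆ ⋃ n, g n := by
    intro x hxM
    have hxAB : x ∉ A ∨ x ∉ B := by
      by_cases hxA : x ∈ A
      · exact Or.inr (Set.disjoint_left.1 hAB hxA)
      · exact Or.inl hxA
    have main : ∀ C : Set ℝ, @IsClosed ℝ (bh M) C → x ∉ C →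
        ∃ i j, x ∈ Set.Ioo (f i) (f j) ∧ Set.Ioo (f i) (f j) ∩ C = ∅ := by
      intro C hC hxC
      obtain ⟨U, K, hU, hK, hEq⟩ := bh_isOpen_elim hC.isOpen_compl
      have hxU : x ∈ U := by
        have : x ∈ U ∪ K := hEq ▸ hxC
        rcases this with h | h
        · exact h
        · exact absurd hxM (hK h)
      obtain ⟨i, j, hmem, hsub⟩ := exists_Ioo hf hU hxU
      refine ⟨i, j, hmem, Set.eq_empty_iff_forall_notMem.2 fun y ⟨hy1, hy2⟩ => ?_⟩
      have : y ∈ Cᶜ := hEq ▸ Or.inl (hsub hy1)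
      exact this hy2
    rcases hxAB with hx | hx
    · obtain ⟨i, j, hmem, hdisj⟩ := main A hA hx
      refine Set.mem_iUnion.2 ⟨Nat.pair i j, ?_⟩
      rw [hgdef]; dsimp only
      rw [Nat.unpair_pair]
      rw [if_pos (Or.inl hdisj)]
      exact hmem
    · obtain ⟨i, j, hmem, hdisj⟩ := main B hB hx
      refine Set.mem_iUnion.2 ⟨Nat.pair i j, ?_⟩
      rw [hgdef]; dsimp only
      rw [Nat.unpair_pair]
      rw [if_pos (Or.inr hdisj)]
      exact hmem
  -- disjointified family
  set G : ℕ → Set ℝ := fun n => g n \ ⋃ k ∈ Finset.range n, g k with hGdef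
  have hGopen : ∀ n, @IsOpen ℝ (bh M) (G n) := by
    intro n
    have hcl : @IsClosed ℝ (bh M) (⋃ k ∈ Finset.range n, g k) :=
      bh_closed_biUnion fun k => hgclosed k
    rw [hGdef]; dsimp only [Set.diff_eq]
    exact bh_open_inter (hgopen n) hcl.isOpen_compl
  have hGsubg : ∀ n, G n ⊆ g n := fun n x hx => hx.1
  have hGnot : ∀ {k n : ℕ}, k < n → ∀ {x : ℝ}, x ∈ G n → x ∉ g k := by
    intro k n hkn x hx hxk
    exact hx.2 (Set.mem_iUnion₂.2 ⟨k, Finset.mem_range.2 hkn, hxk⟩)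
  have hGdisj : ∀ {m n : ℕ} {x : ℝ}, x ∈ G m → x ∈ G n → m = n := by
    intro m n x hm hn
    rcases lt_trichotomy m n with h | h | h
    · exact absurd (hGsubg m hm) (hGnot h hn)
    · exact h
    · exact absurd (hGsubg n hn) (hGnot h hm)
  have hGmin : ∀ {x : ℝ}, x ∈ (⋃ n, g n) → ∃ n, x ∈ G n := by
    intro x hx
    rcases Set.mem_iUnion.1 hx with ⟨n, hn⟩
    have hex : ∃ n, x ∈ g n := ⟨n, hn⟩
    refine ⟨Nat.find hex, Nat.find_spec hex, fun hmem => ?_⟩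
    rcases Set.mem_iUnion₂.1 hmem with ⟨k, hk, hxk⟩
    exact Nat.find_min hex (Finset.mem_range.1 hk) hxk
  set W : Set ℝ := ⋃ n, (if g n ∩ B = ∅ then G n else ∅) with hWdef
  have hWopen : @IsOpen ℝ (bh M) W := by
    refine bh_open_iUnion fun n => ?_
    split_ifs
    exacts [hGopen n, bh_open_of_open isOpen_empty]
  have hWsub : ∀ {x : ℝ} {n : ℕ}, x ∈ W → x ∈ G n → g n ∩ B = ∅ := by
    intro x n hxW hxG
    rcases Set.mem_iUnion.1 hxW with ⟨m, hm⟩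
    by_cases hc : g m ∩ B = ∅
    · rw [if_pos hc] at hm
      rwa [hGdisj hm hxG] at hc
    · rw [if_neg hc] at hm
      exact absurd hm (Set.notMem_empty x)
  have hWmem : ∀ {x : ℝ} {n : ℕ}, x ∈ G n → g n ∩ B = ∅ → x ∈ W := by
    intro x n hxG hc
    exact Set.mem_iUnion.2 ⟨n, by rw [if_pos hc]; exact hxG⟩
  have hWG : W ⊆ ⋃ n, g n := by
    intro x hx
    rcases Set.mem_iUnion.1 hx with ⟨m, hm⟩
    by_cases hc : g m ∩ B = ∅
    · rw [if_pos hc] at hm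
      exact Set.mem_iUnion.2 ⟨m, hGsubg m hm⟩
    · rw [if_neg hc] at hm
      exact absurd hm (Set.notMem_empty x)
  have hWclosed : @IsClosed ℝ (bh M) W := by
    refine @IsClosed.mk ℝ (bh M) _ ?_
    have hWc : Wᶜ = (⋃ n, g n)ᶜ ∪ ⋃ n, (if g n ∩ B = ∅ then (∅ : Set ℝ) else G n) := by
      ext x
      simp only [Set.mem_compl_iff, Set.mem_union]
      constructor
      · intro hxW
        by_cases hxg : x ∈ ⋃ n, g n
        · obtain ⟨n, hn⟩ := hGmin hxg
          by_cases hc : g n ∩ B = ∅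
          · exact absurd (hWmem hn hc) hxW
          · exact Or.inr (Set.mem_iUnion.2 ⟨n, by rw [if_neg hc]; exact hn⟩)
        · exact Or.inl hxg
      · rintro (hx | hx) hxW
        · exact hx (hWG hxW)
        · rcases Set.mem_iUnion.1 hx with ⟨m, hm⟩
          by_cases hc : g m ∩ B = ∅
          · rw [if_pos hc] at hm
            exact Set.notMem_empty x hm
          · rw [if_neg hc] at hm
            exact hc (hWsub hxW hm)
    rw [hWc]
    refine bh_open_union (bh_open_of_subset_compl ?_) (bh_open_iUnion fun n => ?_)
    · exact Set.compl_subset_compl.2 hgcover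
    · split_ifs
      exacts [bh_open_of_open isOpen_empty, hGopen n]
  have hWB : W ∩ B = ∅ := by
    refine Set.eq_empty_iff_forall_notMem.2 ?_
    rintro x ⟨hxW, hxB⟩
    rcases Set.mem_iUnion.1 hxW with ⟨m, hm⟩
    by_cases hc : g m ∩ B = ∅
    · rw [if_pos hc] at hm
      exact Set.eq_empty_iff_forall_notMem.1 hc x ⟨hGsubg m hm, hxB⟩
    · rw [if_neg hc] at hm
      exact Set.notMem_empty x hm
  have hAMW : ∀ {x : ℝ}, x ∈ A → x ∈ M → x ∈ W := by
    intro x hxA hxM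
    obtain ⟨n, hn⟩ := hGmin (hgcover hxM)
    have hc : g n ∩ B = ∅ := by
      rcases hgdich n with h | h
      · exact absurd (Set.eq_empty_iff_forall_notMem.1 h x) (by
          intro hcon; exact hcon ⟨hGsubg n hn, hxA⟩)
      · exact h
    exact hWmem hn hc
  refine ⟨W ∪ (A \ W), bh_open_union hWopen (bh_open_of_subset_compl ?_), ?_, ?_, ?_⟩
  · intro x hx hxM
    exact hx.2 (hAMW hx.1 hxM)
  · refine @IsClosed.mk ℝ (bh M) _ ?_
    rw [Set.union_diff_self, Set.compl_union]
    exact bh_open_inter hWclosed.isOpen_compl hA.isOpen_compl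
  · intro x hx
    by_cases hxW : x ∈ W
    · exact Or.inl hxW
    · exact Or.inr ⟨hx, hxW⟩
  · refine Set.eq_empty_iff_forall_notMem.2 ?_
    rintro x ⟨hx1, hxB⟩
    rcases hx1 with hxW | ⟨hxA, _⟩
    · exact Set.eq_empty_iff_forall_notMem.1 hWB x ⟨hxW, hxB⟩
    · exact Set.disjoint_left.1 hAB hxA hxB

lemma bh_indLE0 (f : ℕ → ℝ) (hf : DenseRange f) (hfM : ∀ n, f n ∈ Mᶜ) :
    IndLE0 (bh M) := fun A B hA hB hAB => bh_key f hf hfM A B hA hB hAB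

lemma bh_t5 (f : ℕ → ℝ) (hf : DenseRange f) (hfM : ∀ n, f n ∈ Mᶜ)
    (e : ℕ → ℝ) (he : M ⊆ Set.range e) : @T5Space ℝ (bh M) := by
  classical
  have hcn : @CompletelyNormalSpace ℝ (bh M) := by
    refine @CompletelyNormalSpace.mk ℝ (bh M) ?_
    intro A B hAB hBA
    have hCc : ∀ n : ℕ, e n ∈ A → ∃ C : Set ℝ, @IsOpen ℝ (bh M) C ∧ @IsClosed ℝ (bh M) C ∧
        e n ∈ C ∧ C ⊆ (@closure ℝ (bh M) B)ᶜ := by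
      intro n hn
      have hcl : @IsClosed ℝ (bh M) (@closure ℝ (bh M) B) := @isClosed_closure ℝ (bh M) B
      exact bh_nhd hf hfM hcl.isOpen_compl (Set.disjoint_left.1 hBA hn)
    have hDc : ∀ n : ℕ, e n ∈ B → ∃ C : Set ℝ, @IsOpen ℝ (bh M) C ∧ @IsClosed ℝ (bh M) C ∧
        e n ∈ C ∧ C ⊆ (@closure ℝ (bh M) A)ᶜ := by
      intro n hn
      have hcl : @IsClosed ℝ (bh M) (@closure ℝ (bh M) A) := @isClosed_closure ℝ (bh M) A
      exact bh_nhd hf hfM hcl.isOpen_compl (Set.disjoint_right.1 hAB hn)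
    set C : ℕ → Set ℝ := fun n => if h : e n ∈ A then (hCc n h).choose else ∅ with hCdef
    set D : ℕ → Set ℝ := fun n => if h : e n ∈ B then (hDc n h).choose else ∅ with hDdef
    have hCopen : ∀ n, @IsOpen ℝ (bh M) (C n) := fun n => by
      rw [hCdef]; dsimp only; split_ifs with h
      exacts [(hCc n h).choose_spec.1, bh_open_of_open isOpen_empty]
    have hCclosed : ∀ n, @IsClosed ℝ (bh M) (C n) := fun n => by
      rw [hCdef]; dsimp only; split_ifs with h
      exacts [(hCc n h).choose_spec.2.1, bh_closed_of_closed isClosed_empty]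
    have hCB : ∀ n, C n ⊆ (@closure ℝ (bh M) B)ᶜ := fun n => by
      rw [hCdef]; dsimp only; split_ifs with h
      exacts [(hCc n h).choose_spec.2.2.2, Set.empty_subset _]
    have hCmem : ∀ n, e n ∈ A → e n ∈ C n := fun n h => by
      rw [hCdef]; dsimp only; rw [dif_pos h]; exact (hCc n h).choose_spec.2.2.1
    have hDopen : ∀ n, @IsOpen ℝ (bh M) (D n) := fun n => by
      rw [hDdef]; dsimp only; split_ifs with h
      exacts [(hDc n h).choose_spec.1, bh_open_of_open isOpen_empty]
    have hDclosed : ∀ n, @IsClosed ℝ (bh M) (D n) := fun n => by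
      rw [hDdef]; dsimp only; split_ifs with h
      exacts [(hDc n h).choose_spec.2.1, bh_closed_of_closed isClosed_empty]
    have hDA : ∀ n, D n ⊆ (@closure ℝ (bh M) A)ᶜ := fun n => by
      rw [hDdef]; dsimp only; split_ifs with h
      exacts [(hDc n h).choose_spec.2.2.2, Set.empty_subset _]
    have hDmem : ∀ n, e n ∈ B → e n ∈ D n := fun n h => by
      rw [hDdef]; dsimp only; rw [dif_pos h]; exact (hDc n h).choose_spec.2.2.1
    set U : Set ℝ := (A \ M) ∪ ⋃ n, (C n \ ⋃ k ∈ Finset.range (n+1), D k) with hUdef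
    set V : Set ℝ := (B \ M) ∪ ⋃ n, (D n \ ⋃ k ∈ Finset.range (n+1), C k) with hVdef
    have hUopen : @IsOpen ℝ (bh M) U := by
      refine bh_open_union (bh_open_of_subset_compl fun x hx => hx.2)
        (bh_open_iUnion fun n => ?_)
      have hcl : @IsClosed ℝ (bh M) (⋃ k ∈ Finset.range (n+1), D k) :=
        bh_closed_biUnion fun k => hDclosed k
      rw [Set.diff_eq]; exact bh_open_inter (hCopen n) hcl.isOpen_compl
    have hVopen : @IsOpen ℝ (bh M) V := by
      refine bh_open_union (bh_open_of_subset_compl fun x hx => hx.2)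
        (bh_open_iUnion fun n => ?_)
      have hcl : @IsClosed ℝ (bh M) (⋃ k ∈ Finset.range (n+1), C k) :=
        bh_closed_biUnion fun k => hCclosed k
      rw [Set.diff_eq]; exact bh_open_inter (hDopen n) hcl.isOpen_compl
    have hAU : A ⊆ U := by
      intro a ha
      by_cases haM : a ∈ M
      · obtain ⟨n, hn⟩ := he haM
        refine Or.inr (Set.mem_iUnion.2 ⟨n, ⟨hn ▸ hCmem n (hn ▸ ha), fun hmem => ?_⟩⟩)
        rcases Set.mem_iUnion₂.1 hmem with ⟨k, _, hak⟩
        exact hDA k hak (@subset_closure ℝ (bh M) A _ ha)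
      · exact Or.inl ⟨ha, haM⟩
    have hBV : B ⊆ V := by
      intro b hb
      by_cases hbM : b ∈ M
      · obtain ⟨n, hn⟩ := he hbM
        refine Or.inr (Set.mem_iUnion.2 ⟨n, ⟨hn ▸ hDmem n (hn ▸ hb), fun hmem => ?_⟩⟩)
        rcases Set.mem_iUnion₂.1 hmem with ⟨k, _, hbk⟩
        exact hCB k hbk (@subset_closure ℝ (bh M) B _ hb)
      · exact Or.inl ⟨hb, hbM⟩
    have hUV : Disjoint U V := by
      rw [Set.disjoint_left]
      rintro x (⟨hxA, _⟩ | hxC) (⟨hxB, _⟩ | hxD)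
      · exact Set.disjoint_left.1 hBA hxA (@subset_closure ℝ (bh M) B _ hxB)
      · rcases Set.mem_iUnion.1 hxD with ⟨m, hm, _⟩
        exact hDA m hm (@subset_closure ℝ (bh M) A _ hxA)
      · rcases Set.mem_iUnion.1 hxC with ⟨n, hn, _⟩
        exact hCB n hn (@subset_closure ℝ (bh M) B _ hxB)
      · rcases Set.mem_iUnion.1 hxC with ⟨n, hnC, hnD⟩
        rcases Set.mem_iUnion.1 hxD with ⟨m, hmD, hmC⟩
        rcases le_total n m with h | h
        · exact hmC (Set.mem_iUnion₂.2 ⟨n, Finset.mem_range.2 (Nat.lt_succ_of_le h), hnC⟩)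
        · exact hnD (Set.mem_iUnion₂.2 ⟨m, Finset.mem_range.2 (Nat.lt_succ_of_le h), hmD⟩)
    have h1 : @nhdsSet ℝ (bh M) A ≤ Filter.principal U :=
      Filter.le_principal_iff.2 ((@IsOpen.mem_nhdsSet ℝ (bh M) U A hUopen).2 hAU)
    have h2 : @nhdsSet ℝ (bh M) B ≤ Filter.principal V :=
      Filter.le_principal_iff.2 ((@IsOpen.mem_nhdsSet ℝ (bh M) V B hVopen).2 hBV)
    exact Disjoint.mono h1 h2 (Filter.disjoint_principal_principal.2 hUV)
  exact @T5Space.mk ℝ (bh M) bh_t1 hcn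

lemma bh_separable' (hMc : Mᶜ.Countable) : @TopologicalSpace.SeparableSpace ℝ (bh M) := by
  refine @TopologicalSpace.SeparableSpace.mk ℝ (bh M)
    ⟨Mᶜ ∪ Set.range ((↑) : ℚ → ℝ), hMc.union (Set.countable_range _), ?_⟩
  rw [@dense_iff_inter_open ℝ (bh M) _]
  intro O hO hne
  obtain ⟨U, K, hU, hK, rfl⟩ := bh_isOpen_elim hO
  rcases hne with ⟨x, hx | hx⟩
  · obtain ⟨q, hq⟩ := Rat.denseRange_cast.exists_mem_open hU ⟨x, hx⟩
    exact ⟨(q : ℝ), Or.inl hq, Or.inr ⟨q, rfl⟩⟩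
  · exact ⟨x, Or.inr hx, Or.inl (hK hx)⟩

lemma bh_secondCountable (f : ℕ → ℝ) (hf : DenseRange f) (hfM : ∀ n, f n ∈ Mᶜ)
    (hMc : Mᶜ.Countable) : @SecondCountableTopology ℝ (bh M) := by
  set B : Set (Set ℝ) := (Set.range fun p : ℕ × ℕ => Set.Ioo (f p.1) (f p.2)) ∪
    ((fun x : ℝ => ({x} : Set ℝ)) '' Mᶜ) with hBdef
  have hbasis : @TopologicalSpace.IsTopologicalBasis ℝ (bh M) B := by
    refine @TopologicalSpace.isTopologicalBasis_of_isOpen_of_nhds ℝ (bh M) B ?_ ?_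
    · rintro u (⟨p, rfl⟩ | ⟨x, hx, rfl⟩)
      · exact bh_open_of_open isOpen_Ioo
      · exact bh_open_of_subset_compl (Set.singleton_subset_iff.2 hx)
    · intro a u ha hu
      obtain ⟨U, K, hU, hK, rfl⟩ := bh_isOpen_elim hu
      by_cases haK : a ∈ K
      · exact ⟨{a}, Or.inr ⟨a, hK haK, rfl⟩, rfl, Set.singleton_subset_iff.2 (Or.inr haK)⟩
      · have haU : a ∈ U := ha.resolve_right haK
        obtain ⟨i, j, hmem, hsub⟩ := exists_Ioo hf hU haU
        exact ⟨_, Or.inl ⟨(i, j), rfl⟩, hmem, hsub.trans Set.subset_union_left⟩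
  have hcount : B.Countable := (Set.countable_range _).union (hMc.image _)
  exact @TopologicalSpace.IsTopologicalBasis.secondCountableTopology ℝ (bh M) B hbasis hcount

lemma bh_regular (f : ℕ → ℝ) (hf : DenseRange f) (hfM : ∀ n, f n ∈ Mᶜ) :
    @RegularSpace ℝ (bh M) := by
  refine @RegularSpace.of_exists_mem_nhds_isClosed_subset ℝ (bh M) ?_
  intro x s hs
  rcases (@mem_nhds_iff ℝ (bh M) x s).1 hs with ⟨t, hts, hto, hxt⟩
  obtain ⟨Cs, hCo, hCc, hxC, hCt⟩ := bh_nhd hf hfM hto hxt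
  exact ⟨Cs, @IsOpen.mem_nhds ℝ (bh M) x Cs hCo hxC, hCc, hCt.trans hts⟩

lemma bh_metrizable (f : ℕ → ℝ) (hf : DenseRange f) (hfM : ∀ n, f n ∈ Mᶜ)
    (hMc : Mᶜ.Countable) : @TopologicalSpace.MetrizableSpace ℝ (bh M) := by
  have ht3 : @T3Space ℝ (bh M) :=
    @T3Space.mk ℝ (bh M) (@T1Space.t0Space ℝ (bh M) bh_t1) (bh_regular f hf hfM)
  exact @TopologicalSpace.metrizableSpace_of_t3_secondCountable ℝ (bh M) ht3
    (bh_secondCountable f hf hfM hMc)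

lemma bh_not_separable (hM : M.Countable) : ¬ @TopologicalSpace.SeparableSpace ℝ (bh M) := by
  intro h
  obtain ⟨s, hsc, hsd⟩ := @TopologicalSpace.SeparableSpace.exists_countable_dense ℝ (bh M) h
  have hsub : Mᶜ ⊆ s := by
    intro x hx
    have hox : @IsOpen ℝ (bh M) {x} := bh_open_of_subset_compl (Set.singleton_subset_iff.2 hx)
    obtain ⟨y, hy1, hy2⟩ := (@mem_closure_iff ℝ (bh M) x s).1 (hsd x) {x} hox rfl
    rcases hy1 with rfl
    exact hy2
  have huniv : (Set.univ : Set ℝ).Countable := by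
    refine (hM.union hsc).mono fun x _ => ?_
    by_cases hxM : x ∈ M
    · exact Or.inl hxM
    · exact Or.inr (hsub hxM)
  exact Cardinal.not_countable_real huniv

lemma closed_isGδ_of_metrizable {X : Type*} [TopologicalSpace X]
    [TopologicalSpace.MetrizableSpace X] {C : Set X} (hC : IsClosed C) : IsGδ C := by
  letI := TopologicalSpace.metrizableSpaceMetric X
  exact hC.isGδ

lemma bh_not_metrizable (hM : ¬ IsGδ M) : ¬ @TopologicalSpace.MetrizableSpace ℝ (bh M) := by
  intro h
  have hMclosed : @IsClosed ℝ (bh M) M :=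
    @IsClosed.mk ℝ (bh M) M (bh_open_of_subset_compl (subset_refl Mᶜ))
  have hgd : @IsGδ ℝ (bh M) M := @closed_isGδ_of_metrizable ℝ (bh M) h M hMclosed
  obtain ⟨g, hgo, hgi⟩ := (@isGδ_iff_eq_iInter_nat ℝ (bh M) M).1 hgd
  choose U K hU hK hEq using fun n => bh_isOpen_elim (hgo n)
  apply hM
  have hMU : M = ⋂ n, U n := by
    apply subset_antisymm
    · intro x hx
      refine Set.mem_iInter.2 fun n => ?_
      have hxg : x ∈ g n := Set.mem_iInter.1 (hgi ▸ hx) n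
      rw [hEq n] at hxg
      rcases hxg with h' | h'
      · exact h'
      · exact absurd hx (hK n h')
    · intro x hx
      have hxg : x ∈ ⋂ n, g n :=
        Set.mem_iInter.2 fun n => by rw [hEq n]; exact Or.inl (Set.mem_iInter.1 hx n)
      rwa [← hgi] at hxg
  rw [hMU]
  exact IsGδ.iInter_of_isOpen hU

lemma rat_not_gdelta : ¬ IsGδ (Set.range ((↑) : ℚ → ℝ)) := by
  intro h
  have h3 : Dense ({x : ℝ | Irrational x} ∩ Set.range ((↑) : ℚ → ℝ)) :=
    Dense.inter_of_Gδ IsGδ.setOf_irrational h dense_irrational Rat.denseRange_cast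
  have h4 : {x : ℝ | Irrational x} ∩ Set.range ((↑) : ℚ → ℝ) = ∅ := by
    ext x
    simp only [Set.mem_inter_iff, Set.mem_setOf_eq, Set.mem_empty_iff_false, iff_false,
      not_and]
    exact fun hirr hrat => hirr hrat
  rw [h4] at h3
  rcases h3.nonempty with ⟨x, hx⟩
  exact hx

end Helpers

/-- With `Q` the rationals and `P = ℝ \ Q` the irrationals:
`τ_E = τ_E(Q) ∩ τ_E(P)`; `(ℝ, τ_E(P))` is separable metrizable with `Ind ≤ 0`;
`(ℝ, τ_E(Q))` is hereditarily normal with `Ind ≤ 0`, neither metrizable nor separable. -/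
theorem real_line_rational_irrational_extensions (Q P : Set ℝ)
    (hQ : Q = Set.range ((↑) : ℚ → ℝ)) (hP : P = Qᶜ) :
    (∀ O : Set ℝ, IsOpen O ↔
      ((bingHanner (inferInstance : TopologicalSpace ℝ) Q).IsOpen O ∧
       (bingHanner (inferInstance : TopologicalSpace ℝ) P).IsOpen O)) ∧
    (@TopologicalSpace.SeparableSpace ℝ (bingHanner (inferInstance : TopologicalSpace ℝ) P) ∧
      @TopologicalSpace.MetrizableSpace ℝ (bingHanner (inferInstance : TopologicalSpace ℝ) P) ∧
      IndLE0 (bingHanner (inferInstance : TopologicalSpace ℝ) P)) ∧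
    (@T5Space ℝ (bingHanner (inferInstance : TopologicalSpace ℝ) Q) ∧
      IndLE0 (bingHanner (inferInstance : TopologicalSpace ℝ) Q) ∧
      ¬ @TopologicalSpace.MetrizableSpace ℝ (bingHanner (inferInstance : TopologicalSpace ℝ) Q) ∧
      ¬ @TopologicalSpace.SeparableSpace ℝ (bingHanner (inferInstance : TopologicalSpace ℝ) Q)) := by
  open Set Topology in
  classical
  have hPcQ : Pᶜ = Q := by rw [hP, compl_compl]
  obtain ⟨e, he⟩ := exists_surjective_nat ℚ
  set fQ : ℕ → ℝ := fun n => ((e n : ℚ) : ℝ) with hfQdef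
  set fP : ℕ → ℝ := fun n => ((e n : ℚ) : ℝ) + Real.sqrt 2 with hfPdef
  have hfQd : DenseRange fQ := by
    show Dense (Set.range fQ)
    have hr : Set.range fQ = Set.range ((↑) : ℚ → ℝ) := by
      rw [hfQdef]; exact he.range_comp (fun q : ℚ => (q : ℝ))
    rw [hr]
    exact Rat.denseRange_cast
  have h2 : DenseRange (fun q : ℚ => (q : ℝ) + Real.sqrt 2) := by
    have hh : (fun q : ℚ => (q : ℝ) + Real.sqrt 2) =
        (fun x : ℝ => x + Real.sqrt 2) ∘ ((↑) : ℚ → ℝ) := rfl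
    rw [hh]
    exact DenseRange.comp (Homeomorph.addRight (Real.sqrt 2)).surjective.denseRange
      Rat.denseRange_cast (Homeomorph.addRight (Real.sqrt 2)).continuous
  have hfPd : DenseRange fP := by
    show Dense (Set.range fP)
    have hr : Set.range fP = Set.range (fun q : ℚ => (q : ℝ) + Real.sqrt 2) := by
      rw [hfPdef]; exact he.range_comp (fun q : ℚ => (q : ℝ) + Real.sqrt 2)
    rw [hr]
    exact h2
  have hfQP : ∀ n, fQ n ∈ Pᶜ := by
    intro n
    rw [hPcQ, hQ]
    exact ⟨e n, rfl⟩
  have hfPQ : ∀ n, fP n ∈ Qᶜ := by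
    intro n hmem
    rw [hQ] at hmem
    exact (irrational_sqrt_two.ratCast_add (q := e n)) hmem
  have hPcc : Pᶜ.Countable := by
    rw [hPcQ, hQ]
    exact Set.countable_range _
  have heQ : Q ⊆ Set.range fQ := by
    rw [hQ]
    rintro x ⟨q, rfl⟩
    obtain ⟨n, hn⟩ := he q
    exact ⟨n, by rw [hfQdef]; simp [hn]⟩
  refine ⟨?_, ⟨?_, ?_, ?_⟩, ?_, ?_, ?_, ?_⟩
  · intro O
    constructor
    · intro h
      exact ⟨bh_open_of_open h, bh_open_of_open h⟩
    · rintro ⟨h1, h2⟩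
      obtain ⟨U1, K1, hU1, hK1, hO1⟩ := bh_isOpen_elim h1
      obtain ⟨U2, K2, hU2, hK2, hO2⟩ := bh_isOpen_elim h2
      have hO : O = U1 ∪ U2 := by
        apply subset_antisymm
        · intro x hx
          have hx1 : x ∈ U1 ∪ K1 := hO1 ▸ hx
          have hx2 : x ∈ U2 ∪ K2 := hO2 ▸ hx
          rcases hx1 with h | h
          · exact Or.inl h
          rcases hx2 with h' | h'
          · exact Or.inr h'
          · exfalso
            have hxQc : x ∈ Qᶜ := hK1 h
            have hxPc : x ∈ Pᶜ := hK2 h'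
            rw [hPcQ] at hxPc
            exact hxQc hxPc
        · intro x hx
          rcases hx with h | h
          · rw [hO1]; exact Or.inl h
          · rw [hO2]; exact Or.inl h
      rw [hO]
      exact hU1.union hU2
  · exact bh_separable' hPcc
  · exact bh_metrizable fQ hfQd hfQP hPcc
  · exact bh_indLE0 fQ hfQd hfQP
  · exact bh_t5 fP hfPd hfPQ fQ heQ
  · exact bh_indLE0 fP hfPd hfPQ
  · exact bh_not_metrizable (by rw [hQ]; exact rat_not_gdelta)
  · exact bh_not_separable (by rw [hQ]; exact Set.countable_range _)
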